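/- Let M be a semifinite von Neumann algebra with normal faithful semifinite trace τ, let 1 ≤ p < ∞, and let a be a self-adjoint element of M ∩ L^p(M,τ) with ‖a‖_∞ ≤ π. Then (1/2)‖a‖_p ≤ ‖e^{ia} − 1‖_p ≤ ‖a‖_p. -/

import Mathlib

open scoped ENNReal NNReal
open ContinuousLinearMap Filter

variable {H : Type*} [NormedAddCommGroup H] [InnerProductSpace ℂ H] [CompleteSpace H]

/-- A normal faithful semifinite trace on a von Neumann algebra `M ⊆ B(H)`,
with values in `[0, ∞]`. -/
structure IsNormalFaithfulSemifiniteTrace (M : VonNeumannAlgebra H)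
    (τ : (H →L[ℂ] H) → ℝ≥0∞) : Prop where
  map_zero : τ 0 = 0
  map_add : ∀ x y : H →L[ℂ] H, x.IsPositive → y.IsPositive → τ (x + y) = τ x + τ y
  map_smul : ∀ (c : ℝ≥0) (x : H →L[ℂ] H), x.IsPositive → τ ((c : ℂ) • x) = c * τ x
  tracial : ∀ x : H →L[ℂ] H, τ (star x * x) = τ (x * star x)
  faithful : ∀ x : H →L[ℂ] H, x ∈ M → x.IsPositive → τ x = 0 → x = 0
  semifinite : ∀ x : H →L[ℂ] H, x ∈ M → x.IsPositive → τ x ≠ 0 →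
      ∃ y : H →L[ℂ] H, y ∈ M ∧ y.IsPositive ∧ (x - y).IsPositive ∧ τ y ≠ 0 ∧ τ y ≠ ⊤
  normal : ∀ (u : ℕ → (H →L[ℂ] H)) (x : H →L[ℂ] H),
      (∀ n, (u n).IsPositive) → (∀ n, (u (n + 1) - u n).IsPositive) →
      (∀ v : H, Tendsto (fun n => u n v) atTop (nhds (x v))) →
      Tendsto (fun n => τ (u n)) atTop (nhds (τ x))

/-- The absolute value `|x| = (x* x)^{1/2}` of an operator, via continuous functional
calculus. -/
noncomputable def ncAbs (x : H →L[ℂ] H) : H →L[ℂ] H :=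
  cfc (fun t : ℝ => Real.sqrt t) (star x * x)

/-- The noncommutative `L^p`-norm `‖x‖_p = τ(|x|^p)^{1/p}` associated to a trace `τ`. -/
noncomputable def ncLpNorm (τ : (H →L[ℂ] H) → ℝ≥0∞) (p : ℝ) (x : H →L[ℂ] H) : ℝ≥0∞ :=
  (τ (cfc (fun t : ℝ => |t| ^ p) (ncAbs x))) ^ (1 / p)
section Aux

variable {H : Type*} [NormedAddCommGroup H] [InnerProductSpace ℂ H] [CompleteSpace H]

private lemma tau_mono' {M : VonNeumannAlgebra H} {τ : (H →L[ℂ] H) → ℝ≥0∞}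
    (hτ : IsNormalFaithfulSemifiniteTrace M τ) {u v : H →L[ℂ] H}
    (hu : 0 ≤ u) (huv : u ≤ v) : τ u ≤ τ v := by
  have h1 : u.IsPositive := (ContinuousLinearMap.nonneg_iff_isPositive u).mp hu
  have h2 : (v - u).IsPositive := (ContinuousLinearMap.le_def u v).mp huv
  calc τ u ≤ τ u + τ (v - u) := le_self_add
    _ = τ (u + (v - u)) := (hτ.map_add u (v - u) h1 h2).symm
    _ = τ v := by rw [add_sub_cancel]

private lemma exp_smul_eq_cfc (a : H →L[ℂ] H) (hsa : IsSelfAdjoint a) :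
    NormedSpace.exp (Complex.I • a) = cfc (fun z : ℂ => Complex.exp (Complex.I * z)) a := by
  have hn : IsStarNormal a := hsa.isStarNormal
  have hn2 : IsStarNormal (Complex.I • a) := by
    constructor
    rw [star_smul, hsa.star_eq]
    exact (((Commute.refl a).smul_left _).smul_right _)
  have h1 : Complex.I • a = cfc (fun z : ℂ => Complex.I * z) a :=
    (cfc_const_mul_id Complex.I a hn).symm
  rw [← CFC.complex_exp_eq_normedSpace_exp hn2]
  conv_lhs => rw [h1]
  exact (cfc_comp' Complex.exp (fun z : ℂ => Complex.I * z) a).symm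

private lemma conj_exp_mul (t : ℝ) :
    (starRingEnd ℂ) (Complex.exp (Complex.I * t) - 1) * (Complex.exp (Complex.I * t) - 1)
      = ((2 - 2 * Real.cos t : ℝ) : ℂ) := by
  rw [mul_comm Complex.I (t:ℂ), Complex.exp_mul_I]
  simp only [map_sub, map_add, map_mul, map_one, ← Complex.ofReal_cos, ← Complex.ofReal_sin,
    Complex.conj_ofReal, Complex.conj_I]
  have h2 : (Real.sin t : ℂ)^2 + (Real.cos t : ℂ)^2 = 1 := by
    exact_mod_cast Real.sin_sq_add_cos_sq t
  rw [Complex.ofReal_sub, Complex.ofReal_mul, Complex.ofReal_ofNat]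
  linear_combination h2 - ((Real.sin t : ℂ))^2 * Complex.I_sq

private lemma star_exp_sub_one_mul (a : H →L[ℂ] H) (hsa : IsSelfAdjoint a) :
    star (NormedSpace.exp (Complex.I • a) - 1) * (NormedSpace.exp (Complex.I • a) - 1)
      = cfc (fun t : ℝ => 2 - 2 * Real.cos t) a := by
  have hn : IsStarNormal a := hsa.isStarNormal
  set g : ℂ → ℂ := fun z => Complex.exp (Complex.I * z) - 1 with hgdef
  have hgc : Continuous g := by fun_prop
  have hone : cfc (fun _ : ℂ => (1:ℂ)) a = 1 := cfc_one ℂ a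
  have hx : NormedSpace.exp (Complex.I • a) - 1 = cfc g a := by
    rw [exp_smul_eq_cfc a hsa, hgdef,
      cfc_sub (fun z : ℂ => Complex.exp (Complex.I * z)) (fun _ : ℂ => (1:ℂ)) a, hone]
  calc star (NormedSpace.exp (Complex.I • a) - 1) * (NormedSpace.exp (Complex.I • a) - 1)
      = star (cfc g a) * cfc g a := by rw [hx]
    _ = cfc (fun z => star (g z)) a * cfc g a := by rw [cfc_star]
    _ = cfc (fun z => star (g z) * g z) a :=
        (cfc_mul _ _ a (hgc.star.continuousOn) hgc.continuousOn).symm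
    _ = cfc (fun t : ℝ => 2 - 2 * Real.cos t) a := by
        rw [cfc_real_eq_complex (fun t : ℝ => 2 - 2 * Real.cos t) hsa]
        apply cfc_congr
        intro z hz
        have hzre : z = (z.re : ℂ) := hsa.mem_spectrum_eq_re hz
        simp only [hgdef]
        rw [hzre]
        exact conj_exp_mul z.re

end Aux
set_option maxHeartbeats 1000000 in
theorem ncLp_norm_exp_sub_one {M : VonNeumannAlgebra H} {τ : (H →L[ℂ] H) → ℝ≥0∞}
    (hτ : IsNormalFaithfulSemifiniteTrace M τ) {p : ℝ} (hp : 1 ≤ p)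
    (a : H →L[ℂ] H) (haM : a ∈ M) (hsa : IsSelfAdjoint a)
    (hbound : ‖a‖ ≤ Real.pi) (hLp : ncLpNorm τ p a ≠ ⊤) :
    (1 / 2 : ℝ≥0∞) * ncLpNorm τ p a ≤
        ncLpNorm τ p (NormedSpace.exp (Complex.I • a) - 1) ∧
      ncLpNorm τ p (NormedSpace.exp (Complex.I • a) - 1) ≤ ncLpNorm τ p a := by
  rcases subsingleton_or_nontrivial H with hH | hH
  · have he : NormedSpace.exp (Complex.I • a) - 1 = a := Subsingleton.elim _ _
    rw [he]
    refine ⟨?_, le_rfl⟩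
    calc (1/2 : ℝ≥0∞) * ncLpNorm τ p a ≤ 1 * ncLpNorm τ p a :=
          mul_le_mul_left (by norm_num) _
      _ = ncLpNorm τ p a := one_mul _
  have hp0 : p ≠ 0 := by linarith
  have hp00 : (0:ℝ) ≤ p := by linarith
  have hcontp : Continuous fun t : ℝ => |t| ^ p :=
    continuous_abs.rpow_const fun t => Or.inr hp00
  set G : ℝ → ℝ := fun t => |t| ^ p with hGdef
  set F : ℝ → ℝ := fun t => |Real.sqrt (2 - 2 * Real.cos t)| ^ p with hFdef
  have hscont : Continuous fun t : ℝ => Real.sqrt (2 - 2 * Real.cos t) :=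
    (continuous_const.sub (continuous_const.mul Real.continuous_cos)).sqrt
  have hFcont : Continuous F := hscont.abs.rpow_const fun t => Or.inr hp00
  -- representation of the two integrands as cfc of `a`
  have h1 : star a * a = cfc (fun t : ℝ => t * t) a := by
    rw [hsa.star_eq, cfc_mul (fun t : ℝ => t) (fun t : ℝ => t) a, cfc_id' ℝ a]
  have habsa : ncAbs a = cfc (fun t : ℝ => |t|) a := by
    rw [ncAbs, h1, ← cfc_comp' Real.sqrt (fun t : ℝ => t * t) a
      (Real.continuous_sqrt.continuousOn) ((continuous_id.mul continuous_id).continuousOn)]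
    exact cfc_congr fun t _ => Real.sqrt_mul_self_eq_abs t
  have haG : cfc (fun t : ℝ => |t| ^ p) (ncAbs a) = cfc G a := by
    rw [habsa, ← cfc_comp' (fun t : ℝ => |t| ^ p) (fun t : ℝ => |t|) a
      (hcontp.continuousOn) (continuous_abs.continuousOn)]
    exact cfc_congr fun t _ => by rw [abs_abs]
  have hxabs : ncAbs (NormedSpace.exp (Complex.I • a) - 1)
      = cfc (fun t : ℝ => Real.sqrt (2 - 2 * Real.cos t)) a := by
    rw [ncAbs, star_exp_sub_one_mul a hsa,
      ← cfc_comp' Real.sqrt (fun t : ℝ => 2 - 2 * Real.cos t) a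
        (Real.continuous_sqrt.continuousOn)
        ((continuous_const.sub (continuous_const.mul Real.continuous_cos)).continuousOn)]
  have hxG : cfc (fun t : ℝ => |t| ^ p) (ncAbs (NormedSpace.exp (Complex.I • a) - 1))
      = cfc F a := by
    rw [hxabs, ← cfc_comp' (fun t : ℝ => |t| ^ p)
      (fun t : ℝ => Real.sqrt (2 - 2 * Real.cos t)) a
      (hcontp.continuousOn) (hscont.continuousOn)]
  have hna : ncLpNorm τ p a = (τ (cfc G a)) ^ (1/p) := by rw [ncLpNorm, haG]
  have hnx : ncLpNorm τ p (NormedSpace.exp (Complex.I • a) - 1)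
      = (τ (cfc F a)) ^ (1/p) := by rw [ncLpNorm, hxG]
  -- spectrum bound
  have hspec : ∀ t ∈ spectrum ℝ a, |t| ≤ Real.pi := fun t ht =>
    le_trans (by simpa [Real.norm_eq_abs] using spectrum.norm_le_norm_of_mem ht) hbound
  -- pointwise inequalities
  have hub : ∀ t ∈ spectrum ℝ a, F t ≤ G t := by
    intro t _
    apply Real.rpow_le_rpow (abs_nonneg _) _ hp00
    rw [abs_of_nonneg (Real.sqrt_nonneg _), ← Real.sqrt_sq_eq_abs]
    apply Real.sqrt_le_sqrt
    nlinarith [Real.one_sub_sq_div_two_le_cos (x := t)]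
  have hlb : ∀ t ∈ spectrum ℝ a, ((1/2:ℝ) ^ p) * G t ≤ F t := by
    intro t ht
    have h1 : ((1/2:ℝ) ^ p) * |t| ^ p = (|t| / 2) ^ p := by
      rw [div_eq_mul_inv |t| (2:ℝ), Real.mul_rpow (abs_nonneg t) (by norm_num : (0:ℝ) ≤ 2⁻¹),
        one_div]
      exact mul_comm _ _
    rw [hGdef, hFdef]
    simp only
    rw [h1]
    apply Real.rpow_le_rpow (by positivity) _ hp00
    rw [abs_of_nonneg (Real.sqrt_nonneg _)]
    apply Real.le_sqrt_of_sq_le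
    have h2 := Real.cos_le_one_sub_mul_cos_sq (hspec t ht)
    have h5 := sq_abs t
    have h6 : (1:ℝ)/8 ≤ 2 / Real.pi ^ 2 := by
      rw [div_le_div_iff₀ (by norm_num) (by positivity)]
      nlinarith [Real.pi_le_four, Real.pi_pos]
    nlinarith [mul_le_mul_of_nonneg_right h6 (sq_nonneg t)]
  -- cfc inequalities and traces
  have hF0 : 0 ≤ cfc F a := cfc_nonneg fun t _ => by positivity
  have hlow0 : 0 ≤ cfc (fun t => ((1/2:ℝ) ^ p) * G t) a := cfc_nonneg fun t _ => by positivity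
  have hFG : cfc F a ≤ cfc G a := cfc_mono hub hFcont.continuousOn hcontp.continuousOn
  have hlowF : cfc (fun t => ((1/2:ℝ) ^ p) * G t) a ≤ cfc F a :=
    cfc_mono hlb ((continuous_const.mul hcontp).continuousOn) hFcont.continuousOn
  have htau1 : τ (cfc F a) ≤ τ (cfc G a) := tau_mono' hτ hF0 hFG
  have htau2 : τ (cfc (fun t => ((1/2:ℝ) ^ p) * G t) a) ≤ τ (cfc F a) :=
    tau_mono' hτ hlow0 hlowF
  have hsm : cfc (fun t => ((1/2:ℝ) ^ p) * G t) a = ((1/2:ℝ) ^ p) • cfc G a :=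
    cfc_const_mul _ G a hcontp.continuousOn
  set c : ℝ≥0 := (1/2 : ℝ≥0) ^ p with hcdef
  have hcR : (c : ℝ) = (1/2:ℝ) ^ p := by
    rw [hcdef, NNReal.coe_rpow]
    norm_num
  have hcc : ((c : ℝ) : ℂ) • cfc G a = ((1/2:ℝ) ^ p) • cfc G a := by
    rw [Complex.coe_smul, hcR]
  have hGpos : (cfc G a).IsPositive :=
    (ContinuousLinearMap.nonneg_iff_isPositive _).mp (cfc_nonneg fun t _ => by positivity)
  have htau3 : τ (cfc (fun t => ((1/2:ℝ) ^ p) * G t) a) = (c : ℝ≥0∞) * τ (cfc G a) := by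
    rw [hsm, ← hcc]
    exact hτ.map_smul c _ hGpos
  have hkey : (c : ℝ≥0∞) * τ (cfc G a) ≤ τ (cfc F a) := htau3 ▸ htau2
  have hcoe : (c : ℝ≥0∞) = (1/2 : ℝ≥0∞) ^ p := by
    rw [hcdef, ENNReal.coe_rpow_of_ne_zero (by norm_num)]
    norm_num
  constructor
  · rw [hna, hnx]
    have hhalf : (1/2 : ℝ≥0∞) = ((1/2 : ℝ≥0∞) ^ p) ^ (1/p) := by
      rw [← ENNReal.rpow_mul, mul_one_div_cancel hp0, ENNReal.rpow_one]
    calc (1/2 : ℝ≥0∞) * (τ (cfc G a)) ^ (1/p)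
        = ((1/2 : ℝ≥0∞) ^ p) ^ (1/p) * (τ (cfc G a)) ^ (1/p) := by rw [← hhalf]
      _ = (((1/2 : ℝ≥0∞) ^ p) * τ (cfc G a)) ^ (1/p) :=
          (ENNReal.mul_rpow_of_nonneg _ _ (by positivity)).symm
      _ ≤ (τ (cfc F a)) ^ (1/p) := by
          apply ENNReal.rpow_le_rpow _ (by positivity)
          rw [← hcoe]; exact hkey
  · rw [hna, hnx]
    exact ENNReal.rpow_le_rpow htau1 (by positivity)
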